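/- Let n ≥ 1, let V : ℝ × ℝⁿ → ℝⁿ and u : ℝ × ℝⁿ → ℝ be C¹, and suppose u satisfies the continuity equation ∂t u(t,x) + div_x(u · V)(t,x) = 0 for all (t,x). Then for every C¹ function F : ℝ → ℝ and every point (t,x): ∂t(F(u))(t,x) + div_x((F ∘ u) · V)(t,x) = ( F(u(t,x)) − u(t,x) · F′(u(t,x)) ) · div_x V(t,x). -/

import Mathlib

/-- Spatial divergence of a time-dependent vector field on `ℝ × ℝⁿ`:
`∑ i, ∂W_i/∂x_i`. -/
noncomputable def spaceDiv {n : ℕ}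
    (W : ℝ × EuclideanSpace ℝ (Fin n) → EuclideanSpace ℝ (Fin n))
    (t : ℝ) (x : EuclideanSpace ℝ (Fin n)) : ℝ :=
  ∑ i, fderiv ℝ (fun y => W (t, y) i) x (EuclideanSpace.single i 1)

/-- The defect identity for composite scalar fields: if `u` satisfies the
continuity equation `∂t u + div(u V) = 0`, then for every `C¹` function `F`,
`∂t(F(u)) + div((F ∘ u) V) = (F(u) - u F'(u)) · div V` pointwise. -/
theorem stmt2 {n : ℕ} (hn : 1 ≤ n)
    (V : ℝ × EuclideanSpace ℝ (Fin n) → EuclideanSpace ℝ (Fin n))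
    (hV : ContDiff ℝ 1 V)
    (u : ℝ × EuclideanSpace ℝ (Fin n) → ℝ) (hu : ContDiff ℝ 1 u)
    (hcont : ∀ t x, deriv (fun s => u (s, x)) t
      + spaceDiv (fun p => u p • V p) t x = 0)
    (F : ℝ → ℝ) (hF : ContDiff ℝ 1 F) :
    ∀ t x, deriv (fun s => F (u (s, x))) t
        + spaceDiv (fun p => F (u p) • V p) t x
      = (F (u (t, x)) - u (t, x) * deriv F (u (t, x))) * spaceDiv V t x := by
  intro t x
  have hud : Differentiable ℝ u := hu.differentiable one_ne_zero
  have hVd : Differentiable ℝ V := hV.differentiable one_ne_zero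
  have hFd : Differentiable ℝ F := hF.differentiable one_ne_zero
  -- inclusion maps
  have hincl : Differentiable ℝ (fun y : EuclideanSpace ℝ (Fin n) => ((t, y) : ℝ × EuclideanSpace ℝ (Fin n))) :=
    (differentiable_const t).prodMk differentiable_id
  have hinclt : Differentiable ℝ (fun s : ℝ => ((s, x) : ℝ × EuclideanSpace ℝ (Fin n))) :=
    differentiable_id.prodMk (differentiable_const x)
  have huy : Differentiable ℝ (fun y => u (t, y)) := hud.comp hincl
  have hus : Differentiable ℝ (fun s => u (s, x)) := hud.comp hinclt
  have hVyi : ∀ i, Differentiable ℝ (fun y => V (t, y) i) := fun i =>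
    (EuclideanSpace.proj (𝕜 := ℝ) i).differentiable.comp (hVd.comp hincl)
  set A := deriv (fun s => u (s, x)) t with hA
  set c := u (t, x) with hc
  set D : Fin n → ℝ := fun i => fderiv ℝ (fun y => u (t, y)) x (EuclideanSpace.single i 1) with hD
  set E : Fin n → ℝ := fun i => fderiv ℝ (fun y => V (t, y) i) x (EuclideanSpace.single i 1) with hE
  -- time derivative of F ∘ u
  have ht : deriv (fun s => F (u (s, x))) t = deriv F c * A := by
    have := deriv_comp t (hFd _) (hus t)
    simpa [Function.comp_def] using this
  -- divergence of u • V
  have hdivu : spaceDiv (fun p => u p • V p) t x = ∑ i, (D i * V (t, x) i + c * E i) := by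
    unfold spaceDiv
    refine Finset.sum_congr rfl fun i _ => ?_
    have h1 : (fun y => (u (t, y) • V (t, y)) i) = fun y => u (t, y) * V (t, y) i := by
      funext y; simp [PiLp.smul_apply, smul_eq_mul]
    rw [h1, fderiv_fun_mul (huy x) ((hVyi i) x)]
    simp only [ContinuousLinearMap.add_apply, ContinuousLinearMap.smul_apply, smul_eq_mul, hD, hE, hc]
    ring
  have hdivF : spaceDiv (fun p => F (u p) • V p) t x
      = ∑ i, (deriv F c * D i * V (t, x) i + F c * E i) := by
    unfold spaceDiv
    refine Finset.sum_congr rfl fun i _ => ?_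
    have h1 : (fun y => (F (u (t, y)) • V (t, y)) i) = fun y => F (u (t, y)) * V (t, y) i := by
      funext y; simp [PiLp.smul_apply, smul_eq_mul]
    have hFu : DifferentiableAt ℝ (fun y => F (u (t, y))) x :=
      (hFd _).comp x (huy x)
    rw [h1, fderiv_fun_mul hFu ((hVyi i) x)]
    have hchain : fderiv ℝ (fun y => F (u (t, y))) x (EuclideanSpace.single i 1)
        = deriv F c * D i := by
      have := fderiv_comp x (hFd (u (t, x))) (huy x)
      rw [show (fun y => F (u (t, y))) = F ∘ (fun y => u (t, y)) from rfl, this]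
      simp [hD, hc]
      ring
    simp only [ContinuousLinearMap.add_apply, ContinuousLinearMap.smul_apply, smul_eq_mul, hchain, hE, hc]
    ring
  -- divergence of V
  have hdivV : spaceDiv V t x = ∑ i, E i := rfl
  -- continuity equation
  have hce : A + ∑ i, (D i * V (t, x) i + c * E i) = 0 := by
    have := hcont t x
    rwa [hdivu] at this
  rw [ht, hdivF, hdivV]
  have hexp : ∑ i, (deriv F c * D i * V (t, x) i + F c * E i)
      = deriv F c * (∑ i, D i * V (t, x) i) + F c * ∑ i, E i := by
    rw [Finset.sum_add_distrib, Finset.mul_sum, Finset.mul_sum]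
    ring_nf
  have hexp2 : ∑ i, (D i * V (t, x) i + c * E i)
      = (∑ i, D i * V (t, x) i) + c * ∑ i, E i := by
    rw [Finset.sum_add_distrib, Finset.mul_sum]
  rw [hexp2] at hce
  rw [hexp]
  linear_combination deriv F c * hce
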